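/- Let k ≥ 2 and let G₁, …, G_k be profinite groups such that, for each i, every open subgroup K of Gᵢ has the property that the closure of the commutator subgroup of K is open in Gᵢ. Let G₀ be a closed subgroup of G₁ × ⋯ × G_k. Suppose that for all 1 ≤ i < j ≤ k, the image of G₀ under the projection to Gᵢ × Gⱼ is an open subgroup of Gᵢ × Gⱼ. Then G₀ is an open subgroup of G₁ × ⋯ × G_k. -/

import Mathlib

/-- Ribet's lemma: let `G₁, …, G_k` (`k ≥ 2`) be profinite groups such that for each `i`,
the closure of the commutator subgroup of any open subgroup of `Gᵢ` is open in `Gᵢ`. If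
`G₀` is a closed subgroup of `G₁ × ⋯ × G_k` whose image in `Gᵢ × Gⱼ` is open for all
`i < j`, then `G₀` is open in `G₁ × ⋯ × G_k`. -/
theorem ribet_open_in_product {k : ℕ} (hk : 2 ≤ k) (G : Fin k → Type*)
    [∀ i, Group (G i)] [∀ i, TopologicalSpace (G i)] [∀ i, IsTopologicalGroup (G i)]
    [∀ i, CompactSpace (G i)] [∀ i, TotallyDisconnectedSpace (G i)] [∀ i, T2Space (G i)]
    (hcomm : ∀ i, ∀ K : Subgroup (G i), IsOpen (K : Set (G i)) →
      IsOpen (((⁅K, K⁆ : Subgroup (G i)).topologicalClosure : Subgroup (G i)) : Set (G i)))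
    (G₀ : Subgroup (∀ i, G i)) (hclosed : IsClosed (G₀ : Set (∀ i, G i)))
    (hproj : ∀ i j : Fin k, i < j →
      IsOpen ((G₀.map ((Pi.evalMonoidHom G i).prod (Pi.evalMonoidHom G j)) :
        Subgroup (G i × G j)) : Set (G i × G j))) :
    IsOpen (G₀ : Set (∀ i, G i)) := by
  classical
  -- For a finite set `S` of coordinates and a coordinate `j`, `N S j` is the subgroup of
  -- `G j` consisting of `j`-th coordinates of elements of `G₀` that are `1` on `S`.
  set N : ∀ (_S : Finset (Fin k)) (j : Fin k), Subgroup (G j) := fun S j =>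
    (G₀ ⊓ ⨅ i ∈ S, (Pi.evalMonoidHom G i).ker).map (Pi.evalMonoidHom G j) with hN
  have hmemN : ∀ (S : Finset (Fin k)) (j : Fin k) (x : G j),
      x ∈ N S j ↔ ∃ g ∈ G₀, (∀ i ∈ S, g i = 1) ∧ g j = x := by
    intro S j x
    simp only [hN, Subgroup.mem_map, Subgroup.mem_inf, Subgroup.mem_iInf,
      MonoidHom.mem_ker, Pi.evalMonoidHom_apply]
    tauto
  -- `N S j` is closed.
  have hNclosed : ∀ (S : Finset (Fin k)) (j : Fin k), IsClosed ((N S j : Subgroup (G j)) : Set (G j)) := by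
    intro S j
    have h1 : IsClosed ((G₀ ⊓ ⨅ i ∈ S, (Pi.evalMonoidHom G i).ker : Subgroup (∀ i, G i)) : Set (∀ i, G i)) := by
      have : ((G₀ ⊓ ⨅ i ∈ S, (Pi.evalMonoidHom G i).ker : Subgroup (∀ i, G i)) : Set (∀ i, G i))
          = (G₀ : Set (∀ i, G i)) ∩ ⋂ i ∈ S, ((Pi.evalMonoidHom G i).ker : Set (∀ i, G i)) := by
        ext g
        simp [Subgroup.mem_inf, Subgroup.mem_iInf]
      rw [this]
      refine hclosed.inter (isClosed_biInter fun i _ => ?_)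
      have : ((Pi.evalMonoidHom G i).ker : Set (∀ i, G i)) = (fun g : ∀ i, G i => g i) ⁻¹' {1} := by
        ext g; simp [MonoidHom.mem_ker]
      rw [this]
      exact isClosed_singleton.preimage (continuous_apply i)
    have hcpt : IsCompact ((G₀ ⊓ ⨅ i ∈ S, (Pi.evalMonoidHom G i).ker : Subgroup (∀ i, G i)) : Set (∀ i, G i)) :=
      h1.isCompact
    have himg : IsCompact ((N S j : Subgroup (G j)) : Set (G j)) := by
      have : ((N S j : Subgroup (G j)) : Set (G j))
          = (fun g : ∀ i, G i => g j) '' ((G₀ ⊓ ⨅ i ∈ S, (Pi.evalMonoidHom G i).ker : Subgroup (∀ i, G i)) : Set (∀ i, G i)) := by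
        ext x
        simp [hN, Subgroup.mem_map]
      rw [this]
      exact hcpt.image (continuous_apply j)
    exact himg.isClosed
  -- Base case: for `i ≠ j`, `N {i} j` is open, being a slice of the open image in `G i × G j`.
  have hbase : ∀ (i j : Fin k), i ≠ j → IsOpen ((N {i} j : Subgroup (G j)) : Set (G j)) := by
    intro i j hij
    rcases lt_or_gt_of_ne hij with h | h
    · -- i < j
      have hP := hproj i j h
      have hcont : Continuous (fun x : G j => ((1 : G i), x)) :=
        continuous_const.prodMk continuous_id
      have heq : ((N {i} j : Subgroup (G j)) : Set (G j))
          = (fun x : G j => ((1 : G i), x)) ⁻¹'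
            ((G₀.map ((Pi.evalMonoidHom G i).prod (Pi.evalMonoidHom G j)) :
              Subgroup (G i × G j)) : Set (G i × G j)) := by
        ext x
        simp only [Set.mem_preimage, SetLike.mem_coe, Subgroup.mem_map, MonoidHom.prod_apply,
          Pi.evalMonoidHom_apply, Prod.mk.injEq]
        rw [hmemN]
        constructor
        · rintro ⟨g, hg, hS, hx⟩
          exact ⟨g, hg, hS i (Finset.mem_singleton_self i), hx⟩
        · rintro ⟨g, hg, h1, h2⟩
          exact ⟨g, hg, fun i' hi' => by rw [Finset.mem_singleton] at hi'; subst hi'; exact h1, h2⟩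
      rw [heq]
      exact hP.preimage hcont
    · -- j < i
      have hP := hproj j i h
      have hcont : Continuous (fun x : G j => (x, (1 : G i))) :=
        continuous_id.prodMk continuous_const
      have heq : ((N {i} j : Subgroup (G j)) : Set (G j))
          = (fun x : G j => (x, (1 : G i))) ⁻¹'
            ((G₀.map ((Pi.evalMonoidHom G j).prod (Pi.evalMonoidHom G i)) :
              Subgroup (G j × G i)) : Set (G j × G i)) := by
        ext x
        simp only [Set.mem_preimage, SetLike.mem_coe, Subgroup.mem_map, MonoidHom.prod_apply,
          Pi.evalMonoidHom_apply, Prod.mk.injEq]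
        rw [hmemN]
        constructor
        · rintro ⟨g, hg, hS, hx⟩
          exact ⟨g, hg, hx, hS i (Finset.mem_singleton_self i)⟩ 
        · rintro ⟨g, hg, h1, h2⟩
          exact ⟨g, hg, fun i' hi' => by rw [Finset.mem_singleton] at hi'; subst hi'; exact h2, h1⟩
      rw [heq]
      exact hP.preimage hcont
  -- Commutator step: commutators of elements of `N S₁ j` and `N S₂ j` lie in `N (S₁ ∪ S₂) j`.
  open scoped commutatorElement in
  have hcommstep : ∀ (S₁ S₂ : Finset (Fin k)) (j : Fin k) (x y : G j),
      x ∈ N S₁ j → y ∈ N S₂ j → ⁅x, y⁆ ∈ N (S₁ ∪ S₂) j := by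
    intro S₁ S₂ j x y hx hy
    rw [hmemN] at hx hy ⊢
    obtain ⟨g, hg, hgS, hgj⟩ := hx
    obtain ⟨h, hh, hhS, hhj⟩ := hy
    refine ⟨⁅g, h⁆, ?_, fun i hi => ?_, ?_⟩
    · rw [commutatorElement_def]
      exact G₀.mul_mem (G₀.mul_mem (G₀.mul_mem hg hh) (G₀.inv_mem hg)) (G₀.inv_mem hh)
    · show ⁅g i, h i⁆ = 1
      rcases Finset.mem_union.mp hi with hi1 | hi2
      · rw [hgS i hi1]; simp [commutatorElement_def]
      · rw [hhS i hi2]; simp [commutatorElement_def]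
    · show ⁅g j, h j⁆ = ⁅x, y⁆
      rw [hgj, hhj]
  -- Main induction: for nonempty `S` not containing `j`, `N S j` contains an open subgroup.
  have key : ∀ (n : ℕ) (S : Finset (Fin k)) (j : Fin k), S.card ≤ n → S.Nonempty → j ∉ S →
      ∃ U : Subgroup (G j), IsOpen (U : Set (G j)) ∧ U ≤ N S j := by
    intro n
    induction n with
    | zero =>
      intro S j hcard hne _
      exact absurd (Finset.card_pos.mpr hne) (by omega)
    | succ n ih =>
      intro S j hcard hne hj
      obtain ⟨i, hi⟩ := hne
      by_cases hS1 : S.card ≤ 1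
      · -- S = {i}
        have : S = {i} := by
          apply Finset.eq_singleton_iff_unique_mem.mpr
          exact ⟨hi, fun b hb => by
            have := Finset.card_le_one.mp hS1 b hb i hi; exact this⟩
        subst this
        have hij : i ≠ j := fun h => hj (h ▸ hi)
        exact ⟨N {i} j, hbase i j hij, le_refl _⟩
      · -- split S = (S.erase i) ∪ {i}
        have hS' : (S.erase i).Nonempty := by
          rw [← Finset.card_pos, Finset.card_erase_of_mem hi]; omega
        have hj' : j ∉ S.erase i := fun h => hj (Finset.mem_of_mem_erase h)
        have hcard' : (S.erase i).card ≤ n := by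
          rw [Finset.card_erase_of_mem hi]; omega
        obtain ⟨U', hU'open, hU'le⟩ := ih (S.erase i) j hcard' hS' hj'
        have hij : i ≠ j := fun h => hj (h ▸ hi)
        set U : Subgroup (G j) := U' ⊓ N {i} j with hU
        have hUopen : IsOpen (U : Set (G j)) := by
          have : (U : Set (G j)) = (U' : Set (G j)) ∩ (N {i} j : Set (G j)) := rfl
          rw [this]
          exact hU'open.inter (hbase i j hij)
        have hcommle : ⁅U, U⁆ ≤ N S j := by
          rw [Subgroup.commutator_le]
          intro g₁ hg₁ g₂ hg₂
          have h1 : g₁ ∈ N (S.erase i) j := hU'le (Subgroup.mem_inf.mp hg₁).1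
          have h2 : g₂ ∈ N {i} j := (Subgroup.mem_inf.mp hg₂).2
          have := hcommstep (S.erase i) {i} j g₁ g₂ h1 h2
          have hSeq : S.erase i ∪ {i} = S := by
            ext b
            simp only [Finset.mem_union, Finset.mem_erase, Finset.mem_singleton]
            constructor
            · rintro (⟨_, hb⟩ | rfl) <;> [exact hb; exact hi]
            · intro hb
              by_cases hbi : b = i
              · right; exact hbi
              · left; exact ⟨hbi, hb⟩
          rwa [hSeq] at this
        have hclle : (⁅U, U⁆ : Subgroup (G j)).topologicalClosure ≤ N S j :=
          Subgroup.topologicalClosure_minimal _ hcommle (hNclosed S j)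
        exact ⟨(⁅U, U⁆ : Subgroup (G j)).topologicalClosure, hcomm j U hUopen, hclle⟩
  -- For each `j`, get an open subgroup `U j ≤ N (univ.erase j) j`.
  have hmain : ∀ j : Fin k, ∃ U : Subgroup (G j), IsOpen (U : Set (G j)) ∧
      U ≤ N (Finset.univ.erase j) j := by
    intro j
    apply key (Finset.univ.erase j).card _ j le_rfl
    · rw [← Finset.card_pos, Finset.card_erase_of_mem (Finset.mem_univ j), Finset.card_univ,
        Fintype.card_fin]
      omega
    · exact Finset.notMem_erase j Finset.univ
  choose U hUopen hUle using hmain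
  -- The product of the `U j` is an open subgroup contained in `G₀`.
  have hple : Subgroup.pi Set.univ U ≤ G₀ := by
    intro g hg
    rw [Subgroup.mem_pi] at hg
    have hsingle : ∀ j : Fin k, Pi.mulSingle j (g j) ∈ G₀ := by
      intro j
      have := hUle j (hg j (Set.mem_univ j))
      rw [hmemN] at this
      obtain ⟨h, hh, hS, hj⟩ := this
      have : h = Pi.mulSingle j (g j) := by
        funext i
        by_cases hij : i = j
        · subst hij; rw [hj, Pi.mulSingle_eq_same]
        · rw [hS i (Finset.mem_erase.mpr ⟨hij, Finset.mem_univ i⟩),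
            Pi.mulSingle_eq_of_ne hij]
      exact this ▸ hh
    exact Subgroup.pi_mem_of_mulSingle_mem g hsingle
  have hpopen : IsOpen ((Subgroup.pi Set.univ U : Subgroup (∀ i, G i)) : Set (∀ i, G i)) := by
    have : ((Subgroup.pi Set.univ U : Subgroup (∀ i, G i)) : Set (∀ i, G i))
        = Set.pi Set.univ (fun j => (U j : Set (G j))) := by
      ext g; simp [Subgroup.mem_pi, Set.mem_pi]
    rw [this]
    exact isOpen_set_pi Set.finite_univ fun j _ => hUopen j
  exact Subgroup.isOpen_mono hple hpopen
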